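/- arXiv:1909.09717 — 2 statements merged into one kernel-verified Lean document; each statement's English description precedes it below -/
import Mathlib

section
/- Let A be a normed division algebra and let a, c ∈ Im A. Then a × (a × c) = −‖a‖² • c + ⟨a,c⟩ • a. -/
open scoped RealInnerProductSpace

/-- A normed division algebra: a real inner product space with an `ℝ`-bilinear
multiplication (not necessarily associative or commutative), a two-sided
multiplicative identity `one ≠ 0`, satisfying `‖a*b‖ = ‖a‖ * ‖b‖`. -/
structure NormedDivisionAlgebra (A : Type*) [NormedAddCommGroup A] [InnerProductSpace ℝ A] where
  mul : A →ₗ[ℝ] A →ₗ[ℝ] A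
  one : A
  one_ne_zero : one ≠ 0
  one_mul : ∀ a : A, mul one a = a
  mul_one : ∀ a : A, mul a one = a
  norm_mul : ∀ a b : A, ‖mul a b‖ = ‖a‖ * ‖b‖

namespace NormedDivisionAlgebra

variable {A : Type*} [NormedAddCommGroup A] [InnerProductSpace ℝ A]

/-- `Re a`: the orthogonal projection of `a` onto the real part `Re A = ℝ · 1`. -/
noncomputable def re (D : NormedDivisionAlgebra A) (a : A) : A :=
  (⟪a, D.one⟫ / ‖D.one‖ ^ 2) • D.one

/-- `Im a`: the orthogonal projection of `a` onto the imaginary part `Im A = (ℝ · 1)ᗮ`. -/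
noncomputable def im (D : NormedDivisionAlgebra A) (a : A) : A := a - D.re a

/-- The conjugate `conj a = Re a - Im a`. -/
noncomputable def conj (D : NormedDivisionAlgebra A) (a : A) : A := D.re a - D.im a

/-- The real part `Re A = ℝ · 1` as a submodule. -/
def ReSub (D : NormedDivisionAlgebra A) : Submodule ℝ A := Submodule.span ℝ {D.one}

/-- The imaginary part `Im A = (ℝ · 1)ᗮ` as a submodule. -/
noncomputable def ImSub (D : NormedDivisionAlgebra A) : Submodule ℝ A := (Submodule.span ℝ {D.one})ᗮ

/-- The commutator `[a, b] = a*b - b*a`. -/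
def comm (D : NormedDivisionAlgebra A) (a b : A) : A := D.mul a b - D.mul b a

/-- The associator `[a, b, c] = (a*b)*c - a*(b*c)`. -/
def assoc (D : NormedDivisionAlgebra A) (a b c : A) : A :=
  D.mul (D.mul a b) c - D.mul a (D.mul b c)

/-- The cross product `a × b = Im (a*b)` (intended for `a, b ∈ Im A`). -/
noncomputable def cross (D : NormedDivisionAlgebra A) (a b : A) : A := D.im (D.mul a b)

end NormedDivisionAlgebra

section Aux

open NormedDivisionAlgebra

variable {A : Type*} [NormedAddCommGroup A] [InnerProductSpace ℝ A]
  (D : NormedDivisionAlgebra A)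

lemma nda_norm_one : ‖D.one‖ = 1 := by
  have h := D.norm_mul D.one D.one
  rw [D.one_mul] at h
  have hne : ‖D.one‖ ≠ 0 := norm_ne_zero_iff.mpr D.one_ne_zero
  have h' : ‖D.one‖ * 1 = ‖D.one‖ * ‖D.one‖ := by rw [_root_.mul_one]; exact h
  exact (mul_left_cancel₀ hne h').symm

lemma nda_norm_sq_mul (a x : A) : ‖D.mul a x‖ ^ 2 = ‖a‖ ^ 2 * ‖x‖ ^ 2 := by
  rw [D.norm_mul]; ring

lemma nda_inner_mul_mul_left (a x y : A) :
    ⟪D.mul a x, D.mul a y⟫ = ‖a‖ ^ 2 * ⟪x, y⟫ := by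
  have h1 : ‖D.mul a (x + y)‖ ^ 2 = ‖a‖ ^ 2 * ‖x + y‖ ^ 2 := nda_norm_sq_mul D a _
  rw [map_add, norm_add_sq_real, norm_add_sq_real, nda_norm_sq_mul, nda_norm_sq_mul] at h1
  nlinarith [h1]

lemma nda_exchange (a c x y : A) :
    ⟪D.mul a x, D.mul c y⟫ + ⟪D.mul c x, D.mul a y⟫ = 2 * ⟪a, c⟫ * ⟪x, y⟫ := by
  have h := nda_inner_mul_mul_left D (a + c) x y
  rw [norm_add_sq_real] at h
  simp only [map_add, LinearMap.add_apply, inner_add_left, inner_add_right] at h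
  rw [nda_inner_mul_mul_left, nda_inner_mul_mul_left] at h
  nlinarith [h]

lemma nda_skew {a : A} (ha : ⟪a, D.one⟫ = 0) (x y : A) :
    ⟪D.mul a x, y⟫ = -⟪x, D.mul a y⟫ := by
  have h := nda_exchange D a D.one x y
  rw [D.one_mul, D.one_mul, ha] at h
  linarith

lemma nda_mem_im_iff {x : A} : x ∈ D.ImSub ↔ ⟪x, D.one⟫ = 0 := by
  rw [NormedDivisionAlgebra.ImSub, Submodule.mem_orthogonal_singleton_iff_inner_left]

lemma nda_im_of_im {x : A} (hx : ⟪x, D.one⟫ = 0) : D.im x = x := by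
  rw [NormedDivisionAlgebra.im, NormedDivisionAlgebra.re, hx]
  simp

lemma nda_re_smul (r : ℝ) (x : A) : D.re (r • x) = r • D.re x := by
  rw [NormedDivisionAlgebra.re, NormedDivisionAlgebra.re, real_inner_smul_left,
    smul_smul, mul_div_assoc]

lemma nda_im_smul (r : ℝ) (x : A) : D.im (r • x) = r • D.im x := by
  rw [NormedDivisionAlgebra.im, NormedDivisionAlgebra.im, nda_re_smul, smul_sub]

lemma nda_im_add (x y : A) : D.im (x + y) = D.im x + D.im y := by
  simp only [NormedDivisionAlgebra.im, NormedDivisionAlgebra.re, inner_add_left, add_div,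
    add_smul]
  abel

lemma nda_mul_mul_self {a : A} (ha : ⟪a, D.one⟫ = 0) (c : A) :
    D.mul a (D.mul a c) = (-(‖a‖ ^ 2)) • c := by
  apply ext_inner_right ℝ
  intro v
  rw [nda_skew D ha, nda_inner_mul_mul_left, real_inner_smul_left]
  ring

end Aux

theorem nda_cross_cross_self {A : Type*} [NormedAddCommGroup A] [InnerProductSpace ℝ A]
    (D : NormedDivisionAlgebra A) (a c : A) (ha : a ∈ D.ImSub) (hc : c ∈ D.ImSub) :
    D.cross a (D.cross a c) = (-(‖a‖ ^ 2)) • c + ⟪a, c⟫ • a := by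
  rw [nda_mem_im_iff] at ha hc
  have h1 : ⟪D.mul a c, D.one⟫ = -⟪a, c⟫ := by
    rw [nda_skew D ha, D.mul_one, real_inner_comm]
  have him : D.im (D.mul a c) = D.mul a c + ⟪a, c⟫ • D.one := by
    rw [NormedDivisionAlgebra.im, NormedDivisionAlgebra.re, h1, nda_norm_one, sub_eq_add_neg,
      ← neg_smul]
    norm_num
  rw [NormedDivisionAlgebra.cross, NormedDivisionAlgebra.cross, him, map_add, map_smul,
    D.mul_one, nda_im_add, nda_im_smul, nda_mul_mul_self D ha, nda_im_smul,
    nda_im_of_im D hc, nda_im_of_im D ha]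
end

section
/- Let A be a normed division algebra and let a, b, c, d ∈ Im A. Then ⟨a × b, c × d⟩ = ⟨a,c⟩⟨b,d⟩ − ⟨a,d⟩⟨b,c⟩ − (1/2)⟨a, [b,c,d]⟩, where [b,c,d] = (b*c)*d − b*(c*d) is the associator; in particular, ⟨a × b, a × d⟩ = ‖a‖²⟨b,d⟩ − ⟨a,b⟩⟨a,d⟩. -/
open scoped RealInnerProductSpace

section Aux

variable {A : Type*} [NormedAddCommGroup A] [InnerProductSpace ℝ A]
  (D : NormedDivisionAlgebra A)

lemma nda_L1 (x z w : A) : ⟪D.mul x z, D.mul x w⟫ = ‖x‖ ^ 2 * ⟪z, w⟫ := by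
  have pol : ∀ u v : A, ⟪u, v⟫ = (‖u + v‖ ^ 2 - ‖u‖ ^ 2 - ‖v‖ ^ 2) / 2 := by
    intro u v; rw [norm_add_sq_real]; ring
  have hadd : D.mul x z + D.mul x w = D.mul x (z + w) := by rw [map_add]
  rw [pol, pol, hadd, D.norm_mul, D.norm_mul, D.norm_mul]
  ring

lemma nda_exch (a b c d : A) :
    ⟪D.mul a c, D.mul b d⟫ + ⟪D.mul a d, D.mul b c⟫ = 2 * ⟪a, b⟫ * ⟪c, d⟫ := by
  have e1 : D.mul (a + b) c = D.mul a c + D.mul b c := by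
    simp only [map_add, LinearMap.add_apply]
  have e2 : D.mul (a + b) d = D.mul a d + D.mul b d := by
    simp only [map_add, LinearMap.add_apply]
  have h := nda_L1 D (a + b) c d
  rw [e1, e2, inner_add_left, inner_add_right, inner_add_right, norm_add_sq_real,
    nda_L1 D a c d, nda_L1 D b c d] at h
  linear_combination h + real_inner_comm (D.mul b c) (D.mul a d)

lemma nda_E1 {y : A} (hy : ⟪y, D.one⟫ = 0) (x : A) : ⟪D.mul x y, D.one⟫ = -⟪x, y⟫ := by
  have h := nda_exch D x D.one y D.one
  simp only [D.one_mul, D.mul_one] at h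
  linear_combination h + 2 * ⟪x, D.one⟫ * hy

lemma nda_Ei {u : A} (hu : ⟪u, D.one⟫ = 0) (x w : A) :
    ⟪D.mul u x, w⟫ = -⟪D.mul u w, x⟫ := by
  have h := nda_exch D u D.one x w
  simp only [D.one_mul] at h
  linear_combination h + 2 * ⟪x, w⟫ * hu

lemma nda_Eii {u : A} (hu : ⟪u, D.one⟫ = 0) (z w : A) :
    ⟪D.mul z u, w⟫ = -⟪z, D.mul w u⟫ := by
  have h := nda_exch D z w u D.one
  simp only [D.mul_one] at h
  linear_combination h + 2 * ⟪z, w⟫ * hu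

lemma nda_sq {x : A} (hx : ⟪x, D.one⟫ = 0) (w : A) :
    ⟪D.mul x x, w⟫ = -(⟪x, x⟫ * ⟪w, D.one⟫) := by
  have h1 := nda_Ei D hx x w
  have h2 : ⟪D.mul x w, D.mul x D.one⟫ = ‖x‖ ^ 2 * ⟪w, D.one⟫ := nda_L1 D x w D.one
  rw [D.mul_one] at h2
  rw [h1, h2, real_inner_self_eq_norm_sq]

lemma nda_anticomm {b c : A} (hb : ⟪b, D.one⟫ = 0) (hc : ⟪c, D.one⟫ = 0) (w : A) :
    ⟪D.mul b c, w⟫ + ⟪D.mul c b, w⟫ = -(2 * ⟪b, c⟫ * ⟪w, D.one⟫) := by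
  have hbc : ⟪b + c, D.one⟫ = 0 := by rw [inner_add_left, hb, hc]; ring
  have e : D.mul (b + c) (b + c)
      = D.mul b b + D.mul b c + D.mul c b + D.mul c c := by
    simp only [map_add, LinearMap.add_apply]; abel
  have h := nda_sq D hbc w
  rw [e, inner_add_left, inner_add_left, inner_add_left, nda_sq D hb w, nda_sq D hc w,
    real_inner_add_add_self] at h
  linear_combination h

end Aux

theorem nda_inner_cross_cross {A : Type*} [NormedAddCommGroup A] [InnerProductSpace ℝ A]
    (D : NormedDivisionAlgebra A) (a b c d : A)
    (ha : a ∈ D.ImSub) (hb : b ∈ D.ImSub) (hc : c ∈ D.ImSub) (hd : d ∈ D.ImSub) :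
    ⟪D.cross a b, D.cross c d⟫ =
        ⟪a, c⟫ * ⟪b, d⟫ - ⟪a, d⟫ * ⟪b, c⟫ - (1 / 2) * ⟪a, D.assoc b c d⟫ ∧
      ⟪D.cross a b, D.cross a d⟫ = ‖a‖ ^ 2 * ⟪b, d⟫ - ⟪a, b⟫ * ⟪a, d⟫ := by
  have hone : ‖D.one‖ = 1 := by
    have h := D.norm_mul D.one D.one
    rw [D.one_mul] at h
    have h0 : ‖D.one‖ ≠ 0 := norm_ne_zero_iff.mpr D.one_ne_zero
    have h1 : ‖D.one‖ * 1 = ‖D.one‖ * ‖D.one‖ := by rw [mul_one]; exact h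
    exact (mul_left_cancel₀ h0 h1).symm
  have him : ∀ x : A, x ∈ D.ImSub → ⟪x, D.one⟫ = 0 := by
    intro x hx
    rw [real_inner_comm]
    exact hx D.one (Submodule.mem_span_singleton_self D.one)
  have ha1 := him a ha
  have hb1 := him b hb
  have hc1 := him c hc
  have hd1 := him d hd
  have hcross : ∀ x y : A, ⟪y, D.one⟫ = 0 →
      D.cross x y = D.mul x y + ⟪x, y⟫ • D.one := by
    intro x y hy
    show D.mul x y - (⟪D.mul x y, D.one⟫ / ‖D.one‖ ^ 2) • D.one = _
    rw [nda_E1 D hy, hone, one_pow, div_one, neg_smul, sub_neg_eq_add]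
  have hcc : ∀ x y z w : A, ⟪y, D.one⟫ = 0 → ⟪w, D.one⟫ = 0 →
      ⟪D.cross x y, D.cross z w⟫ = ⟪D.mul x y, D.mul z w⟫ - ⟪x, y⟫ * ⟪z, w⟫ := by
    intro x y z w hy hw
    rw [hcross x y hy, hcross z w hw, inner_add_left, inner_add_right, inner_add_right,
      real_inner_smul_left, real_inner_smul_left, real_inner_smul_right,
      real_inner_smul_right, real_inner_comm (D.mul z w) D.one, nda_E1 D hy, nda_E1 D hw,
      real_inner_self_eq_norm_sq, hone]
    ring
  have F1 : ⟪D.mul b a, D.mul c d⟫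
      = -⟪D.mul a b, D.mul c d⟫ + 2 * ⟪a, b⟫ * ⟪c, d⟫ := by
    have h := nda_anticomm D ha1 hb1 (D.mul c d)
    linear_combination h - 2 * ⟪a, b⟫ * nda_E1 D hd1 c
  have F2 : ⟪D.mul c b, D.mul a d⟫
      = 2 * ⟪a, c⟫ * ⟪b, d⟫ - ⟪D.mul a b, D.mul c d⟫ := by
    have h := nda_exch D c a b d
    linear_combination h - real_inner_comm (D.mul a b) (D.mul c d)
      + 2 * ⟪b, d⟫ * real_inner_comm a c
  have F3 : ⟪D.mul b c, D.mul a d⟫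
      = ⟪D.mul a b, D.mul c d⟫ - 2 * ⟪a, c⟫ * ⟪b, d⟫ + 2 * ⟪b, c⟫ * ⟪a, d⟫ := by
    have h := nda_anticomm D hb1 hc1 (D.mul a d)
    linear_combination h - F2 - 2 * ⟪b, c⟫ * nda_E1 D hd1 a
  have hassoc : ⟪a, D.assoc b c d⟫
      = -2 * ⟪D.mul a b, D.mul c d⟫ + 2 * ⟪a, c⟫ * ⟪b, d⟫ - 2 * ⟪a, d⟫ * ⟪b, c⟫
        + 2 * ⟪a, b⟫ * ⟪c, d⟫ := by
    have e1 : ⟪a, D.mul (D.mul b c) d⟫ = -⟪D.mul b c, D.mul a d⟫ := by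
      rw [real_inner_comm]; exact nda_Eii D hd1 (D.mul b c) a
    have e2 : ⟪a, D.mul b (D.mul c d)⟫ = -⟪D.mul b a, D.mul c d⟫ := by
      rw [real_inner_comm]; exact nda_Ei D hb1 (D.mul c d) a
    have e0 : ⟪a, D.assoc b c d⟫
        = ⟪a, D.mul (D.mul b c) d⟫ - ⟪a, D.mul b (D.mul c d)⟫ := by
      show ⟪a, D.mul (D.mul b c) d - D.mul b (D.mul c d)⟫ = _
      rw [inner_sub_right]
    rw [e0, e1, e2]
    linear_combination F1 - F3
  constructor
  · rw [hcc a b c d hb1 hd1]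
    linear_combination hassoc / 2
  · rw [hcc a b a d hb1 hd1, nda_L1 D a b d]
end
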